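/- arXiv:1510.08999 — 3 statements merged into one kernel-verified Lean document; each statement's English description precedes it below -/
import Mathlib

section
/- Let λ > 1 and δ ∈ (0,1) be real numbers and n a positive integer. Let (T_k)_{k≥1} be i.i.d. random variables taking values in the positive integers, with E[λ^{2T₁}] < ∞ and E[λ^{2T₁}] · δ^n < 1. Define S₀ = 0, S_k = T₁ + ⋯ + T_k, and for each integer t ≥ 1 let K_t = #{k ≥ 1 : S_k ≤ t} be the number of completed rounds by time t. Then Σ_{t=1}^∞ E[λ^{2t} δ^{n K_t}] < ∞; in particular limₜ→∞ E[λ^{2t} δ^{n K_t}] = 0. -/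
open MeasureTheory ProbabilityTheory Filter

/-- Key estimate for the adaptive TDMA scheduler: if `λ > 1`, `δ ∈ (0,1)`, `n ≥ 1`, the
round durations `(T_k)` are i.i.d. positive-integer random variables with
`E[λ^{2T₁}] < ∞` and `E[λ^{2T₁}] δ^n < 1`, and `K_t` counts the rounds completed by
time `t`, then `∑_{t=1}^∞ E[λ^{2t} δ^{n K_t}] < ∞`; in particular
`E[λ^{2t} δ^{n K_t}] → 0`. -/
theorem stmt5 (lam δ : ℝ) (hlam : 1 < lam) (hδ : δ ∈ Set.Ioo (0 : ℝ) 1)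
    (n : ℕ) (hn : 0 < n)
    {Ω : Type*} [MeasurableSpace Ω] (P : Measure Ω) [IsProbabilityMeasure P]
    (T : ℕ → Ω → ℕ) (hmeas : ∀ k, Measurable (T k)) (hpos : ∀ k ω, 1 ≤ T k ω)
    (hindep : iIndepFun T P)
    (hident : ∀ k, Measure.map (T k) P = Measure.map (T 0) P)
    (hint : Integrable (fun ω => lam ^ (2 * T 0 ω)) P)
    (hcontract : (∫ ω, lam ^ (2 * T 0 ω) ∂P) * δ ^ n < 1)
    (S : ℕ → Ω → ℕ) (hS : ∀ k ω, S k ω = ∑ j ∈ Finset.range k, T j ω)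
    (K : ℕ → Ω → ℕ)
    (hK : ∀ t ω, K t ω = ((Finset.Icc 1 t).filter fun k => S k ω ≤ t).card) :
    Summable (fun t : ℕ => ∫ ω, lam ^ (2 * (t + 1)) * δ ^ (n * K (t + 1) ω) ∂P) ∧
    Tendsto (fun t : ℕ => ∫ ω, lam ^ (2 * t) * δ ^ (n * K t ω) ∂P) atTop (nhds 0) := by
  classical
  obtain ⟨hδ0, hδ1⟩ := hδ
  have hlam0 : (0 : ℝ) < lam := lt_trans one_pos hlam
  -- the mean m = E[lam^(2 T0)]
  set m : ℝ := ∫ ω, lam ^ (2 * T 0 ω) ∂P with hm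
  have hone_le : ∀ ω, (1 : ℝ) ≤ lam ^ (2 * T 0 ω) := fun ω =>
    one_le_pow₀ hlam.le
  have hm1 : (1 : ℝ) ≤ m := by
    have := integral_mono (integrable_const (1 : ℝ)) hint hone_le
    simpa using this
  have hm0 : (0 : ℝ) < m := lt_of_lt_of_le one_pos hm1
  set r : ℝ := m * δ ^ n with hr
  have hr0 : 0 ≤ r := mul_nonneg hm0.le (pow_nonneg hδ0.le n)
  have hr1 : r < 1 := hcontract
  -- measurability of S
  have hSmeas : ∀ k, Measurable (S k) := by
    intro k
    have : S k = fun ω => ∑ j ∈ Finset.range k, T j ω := funext fun ω => hS k ω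
    rw [this]
    exact Finset.measurable_sum _ fun j _ => hmeas j
  -- measurability of K
  have hKmeas : ∀ t, Measurable (K t) := by
    intro t
    have : K t = fun ω => ∑ k ∈ Finset.Icc 1 t, if S k ω ≤ t then 1 else 0 := by
      funext ω; rw [hK, Finset.card_filter]
    rw [this]
    refine Finset.measurable_sum _ fun k _ => Measurable.ite ?_ measurable_const
      measurable_const
    exact measurableSet_le (hSmeas k) measurable_const
  -- integrability of lam^(2 T k), and its integral
  have hTint : ∀ k, Integrable (fun ω => lam ^ (2 * T k ω)) P := by
    intro k
    have hg : Measurable fun x : ℕ => lam ^ (2 * x) := measurable_from_nat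
    have h0 : Integrable (fun x : ℕ => lam ^ (2 * x)) (Measure.map (T 0) P) := by
      rw [integrable_map_measure hg.aestronglyMeasurable (hmeas 0).aemeasurable]
      exact hint
    rw [← hident k] at h0
    rwa [integrable_map_measure hg.aestronglyMeasurable (hmeas k).aemeasurable] at h0
  have hTavg : ∀ k, (∫ ω, lam ^ (2 * T k ω) ∂P) = m := by
    intro k
    have hg : Measurable fun x : ℕ => lam ^ (2 * x) := measurable_from_nat
    calc (∫ ω, lam ^ (2 * T k ω) ∂P)
        = ∫ x, lam ^ (2 * x) ∂(Measure.map (T k) P) :=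
          (integral_map (hmeas k).aemeasurable hg.aestronglyMeasurable).symm
      _ = ∫ x, lam ^ (2 * x) ∂(Measure.map (T 0) P) := by rw [hident k]
      _ = m := integral_map (hmeas 0).aemeasurable hg.aestronglyMeasurable
  -- E[lam ^ (2 S k)] = m ^ k, with integrability
  have key : ∀ k, Integrable (fun ω => lam ^ (2 * S k ω)) P ∧
      (∫ ω, lam ^ (2 * S k ω) ∂P) = m ^ k := by
    intro k
    induction k with
    | zero =>
      have h0 : (fun ω => lam ^ (2 * S 0 ω)) = fun _ => (1 : ℝ) := by
        funext ω; rw [hS]; simp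
      rw [h0]
      simp
    | succ k ih =>
      have hsplit : ∀ ω : Ω, lam ^ (2 * S (k + 1) ω) =
          lam ^ (2 * S k ω) * lam ^ (2 * T k ω) := by
        intro ω
        rw [hS, hS, Finset.sum_range_succ, Nat.mul_add, pow_add]
      have hg : Measurable fun x : ℕ => lam ^ (2 * x) := measurable_from_nat
      have hind : IndepFun (fun ω => lam ^ (2 * S k ω))
          (fun ω => lam ^ (2 * T k ω)) P := by
        have h1 : IndepFun (∑ j ∈ Finset.range k, T j) (T k) P :=
          hindep.indepFun_finset_sum_of_notMem hmeas Finset.notMem_range_self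
        have h2 := h1.comp hg hg
        have e1 : ((fun x : ℕ => lam ^ (2 * x)) ∘ (∑ j ∈ Finset.range k, T j))
            = fun ω => lam ^ (2 * S k ω) := by
          funext ω
          simp only [Function.comp_apply, Finset.sum_apply, hS]
        have e2 : ((fun x : ℕ => lam ^ (2 * x)) ∘ (T k))
            = fun ω => lam ^ (2 * T k ω) := rfl
        rwa [e1, e2] at h2
      have hintmul : Integrable
          ((fun ω => lam ^ (2 * S k ω)) * fun ω => lam ^ (2 * T k ω)) P :=
        hind.integrable_mul ih.1 (hTint k)
      constructor
      · have : (fun ω => lam ^ (2 * S (k + 1) ω)) =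
            ((fun ω => lam ^ (2 * S k ω)) * fun ω => lam ^ (2 * T k ω)) := by
          funext ω; exact hsplit ω
        rw [this]; exact hintmul
      · have hmul := hind.integral_mul_eq_mul_integral ih.1.aestronglyMeasurable (hTint k).aestronglyMeasurable
        have : (fun ω => lam ^ (2 * S (k + 1) ω)) =
            ((fun ω => lam ^ (2 * S k ω)) * fun ω => lam ^ (2 * T k ω)) := by
          funext ω; exact hsplit ω
        rw [this, hmul, ih.2, hTavg k, pow_succ]
  -- pathwise facts
  have hSge : ∀ k ω, k ≤ S k ω := by
    intro k ω
    rw [hS]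
    calc k = ∑ _j ∈ Finset.range k, 1 := by simp
      _ ≤ ∑ j ∈ Finset.range k, T j ω := Finset.sum_le_sum fun j _ => hpos j ω
  have hSmono : ∀ j k (ω : Ω), j ≤ k → S j ω ≤ S k ω := by
    intro j k ω hjk
    rw [hS, hS]
    exact Finset.sum_le_sum_of_subset (Finset.range_subset_range.mpr hjk)
  have hKlt : ∀ t ω, t < S (K t ω + 1) ω := by
    intro t ω
    by_contra h
    push_neg at h
    have hsub : Finset.Icc 1 (K t ω + 1) ⊆
        (Finset.Icc 1 t).filter fun k => S k ω ≤ t := by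
      intro j hj
      rw [Finset.mem_Icc] at hj
      have hSj : S j ω ≤ t := le_trans (hSmono j (K t ω + 1) ω hj.2) h
      have hjt : j ≤ t := le_trans (le_trans hj.2 (hSge _ ω)) h
      exact Finset.mem_filter.mpr ⟨Finset.mem_Icc.mpr ⟨hj.1, hjt⟩, hSj⟩
    have hcard := Finset.card_le_card hsub
    rw [Nat.card_Icc] at hcard
    simp only [Nat.add_sub_cancel] at hcard
    rw [← hK t ω] at hcard
    omega
  have hKle : ∀ t ω, K t ω ≤ t := by
    intro t ω
    rw [hK]
    calc ((Finset.Icc 1 t).filter fun k => S k ω ≤ t).card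
        ≤ (Finset.Icc 1 t).card := Finset.card_filter_le _ _
      _ = t := by rw [Nat.card_Icc]; omega
  -- the sequence of integrals
  set a : ℕ → ℝ := fun t => ∫ ω, lam ^ (2 * t) * δ ^ (n * K t ω) ∂P with ha
  have hfint : ∀ t, Integrable (fun ω => lam ^ (2 * t) * δ ^ (n * K t ω)) P := by
    intro t
    refine Integrable.mono' (integrable_const (lam ^ (2 * t))) ?_ ?_
    · have hg : Measurable fun x : ℕ => lam ^ (2 * t) * δ ^ (n * x) :=
        measurable_from_nat
      exact (hg.comp (hKmeas t)).aestronglyMeasurable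
    · refine Filter.Eventually.of_forall fun ω => ?_
      rw [Real.norm_eq_abs, abs_of_nonneg
        (mul_nonneg (pow_nonneg hlam0.le _) (pow_nonneg hδ0.le _))]
      have h1 : δ ^ (n * K t ω) ≤ 1 := pow_le_one₀ hδ0.le hδ1.le
      calc lam ^ (2 * t) * δ ^ (n * K t ω) ≤ lam ^ (2 * t) * 1 :=
            mul_le_mul_of_nonneg_left h1 (pow_nonneg hlam0.le _)
        _ = lam ^ (2 * t) := mul_one _
  have ha_nonneg : ∀ t, 0 ≤ a t := fun t =>
    integral_nonneg fun ω =>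
      mul_nonneg (pow_nonneg hlam0.le _) (pow_nonneg hδ0.le _)
  -- constants
  have hx1 : (1 : ℝ) < lam ^ 2 := one_lt_pow₀ hlam (by norm_num)
  set c : ℝ := lam ^ 2 / (lam ^ 2 - 1) with hc
  have hc0 : 0 ≤ c := div_nonneg (by positivity) (by linarith)
  set C : ℝ := c * (m * (1 - r)⁻¹) with hC
  -- pathwise bound on partial sums
  have hpath : ∀ (N : ℕ) (ω : Ω),
      ∑ t ∈ Finset.range N, lam ^ (2 * (t + 1)) * δ ^ (n * K (t + 1) ω) ≤
      ∑ k ∈ Finset.range (N + 1), δ ^ (n * k) * (c * lam ^ (2 * S (k + 1) ω)) := by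
    intro N ω
    have step1 : ∀ t ∈ Finset.range N,
        lam ^ (2 * (t + 1)) * δ ^ (n * K (t + 1) ω) =
        ∑ k ∈ Finset.range (N + 1),
          if K (t + 1) ω = k then lam ^ (2 * (t + 1)) * δ ^ (n * k) else 0 := by
      intro t ht
      rw [Finset.mem_range] at ht
      have hmem : K (t + 1) ω ∈ Finset.range (N + 1) :=
        Finset.mem_range.mpr (lt_of_le_of_lt (hKle (t + 1) ω) (by omega))
      rw [Finset.sum_ite_eq (Finset.range (N + 1)) (K (t + 1) ω)
        (fun k => lam ^ (2 * (t + 1)) * δ ^ (n * k)), if_pos hmem]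
    rw [Finset.sum_congr rfl step1, Finset.sum_comm]
    refine Finset.sum_le_sum fun k _ => ?_
    -- bound the inner sum over t for a fixed k
    have hsub : (Finset.range N).filter (fun u => K (u + 1) ω = k) ⊆
        Finset.range (S (k + 1) ω) := by
      intro u hu
      obtain ⟨_, hKu⟩ := Finset.mem_filter.mp hu
      have := hKlt (u + 1) ω
      rw [hKu] at this
      exact Finset.mem_range.mpr (by omega)
    calc ∑ t ∈ Finset.range N,
          (if K (t + 1) ω = k then lam ^ (2 * (t + 1)) * δ ^ (n * k) else 0)
        = ∑ t ∈ (Finset.range N).filter (fun u => K (u + 1) ω = k),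
            lam ^ (2 * (t + 1)) * δ ^ (n * k) := (Finset.sum_filter _ _).symm
      _ ≤ ∑ t ∈ Finset.range (S (k + 1) ω), lam ^ (2 * (t + 1)) * δ ^ (n * k) :=
            Finset.sum_le_sum_of_subset_of_nonneg hsub (fun u _ _ => by positivity)
      _ = δ ^ (n * k) * ∑ t ∈ Finset.range (S (k + 1) ω), lam ^ (2 * (t + 1)) := by
            rw [Finset.mul_sum]
            exact Finset.sum_congr rfl fun t _ => mul_comm _ _
      _ ≤ δ ^ (n * k) * (c * lam ^ (2 * S (k + 1) ω)) := by
          refine mul_le_mul_of_nonneg_left ?_ (pow_nonneg hδ0.le _)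
          calc ∑ t ∈ Finset.range (S (k + 1) ω), lam ^ (2 * (t + 1))
              = lam ^ 2 * ∑ t ∈ Finset.range (S (k + 1) ω), (lam ^ 2) ^ t := by
                rw [Finset.mul_sum]
                refine Finset.sum_congr rfl fun t _ => ?_
                rw [← pow_mul, ← pow_add]
                ring_nf
            _ = lam ^ 2 * (((lam ^ 2) ^ S (k + 1) ω - 1) / (lam ^ 2 - 1)) := by
                rw [geom_sum_eq (ne_of_gt hx1)]
            _ ≤ lam ^ 2 * ((lam ^ 2) ^ S (k + 1) ω / (lam ^ 2 - 1)) := by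
                refine mul_le_mul_of_nonneg_left ?_ (by positivity)
                exact (div_le_div_iff_of_pos_right (by linarith)).mpr (by linarith)
            _ = c * lam ^ (2 * S (k + 1) ω) := by
                rw [hc, pow_mul]
                ring
  -- bound on partial sums of integrals
  have hsum_le : ∀ N : ℕ, ∑ t ∈ Finset.range N, a (t + 1) ≤ C := by
    intro N
    have hRHSint : Integrable (fun ω =>
        ∑ k ∈ Finset.range (N + 1), δ ^ (n * k) * (c * lam ^ (2 * S (k + 1) ω))) P := by
      refine integrable_finset_sum _ fun k _ => ?_
      exact ((key (k + 1)).1.const_mul c).const_mul (δ ^ (n * k))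
    calc ∑ t ∈ Finset.range N, a (t + 1)
        = ∫ ω, ∑ t ∈ Finset.range N,
            lam ^ (2 * (t + 1)) * δ ^ (n * K (t + 1) ω) ∂P :=
          (integral_finset_sum _ fun t _ => hfint (t + 1)).symm
      _ ≤ ∫ ω, ∑ k ∈ Finset.range (N + 1),
            δ ^ (n * k) * (c * lam ^ (2 * S (k + 1) ω)) ∂P := by
          refine integral_mono (integrable_finset_sum _ fun t _ => hfint (t + 1))
            hRHSint ?_
          intro ω
          exact hpath N ω
      _ = ∑ k ∈ Finset.range (N + 1),
            δ ^ (n * k) * (c * (∫ ω, lam ^ (2 * S (k + 1) ω) ∂P)) := by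
          rw [integral_finset_sum _ fun k _ =>
            ((key (k + 1)).1.const_mul c).const_mul (δ ^ (n * k))]
          refine Finset.sum_congr rfl fun k _ => ?_
          rw [integral_const_mul, integral_const_mul]
      _ = ∑ k ∈ Finset.range (N + 1), c * m * r ^ k := by
          refine Finset.sum_congr rfl fun k _ => ?_
          rw [(key (k + 1)).2, hr, mul_pow, pow_succ, pow_mul]
          ring
      _ = c * m * ∑ k ∈ Finset.range (N + 1), r ^ k := by rw [Finset.mul_sum]
      _ ≤ C := by
          rw [hC, ← mul_assoc]
          refine mul_le_mul_of_nonneg_left ?_ (mul_nonneg hc0 hm0.le)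
          exact sum_le_hasSum _ (fun i _ => pow_nonneg hr0 i)
            (hasSum_geometric_of_lt_one hr0 hr1)
  have hsummable : Summable fun t : ℕ => a (t + 1) :=
    summable_of_sum_range_le (fun t => ha_nonneg (t + 1)) hsum_le
  refine ⟨hsummable, ?_⟩
  have h0 : Tendsto (fun t : ℕ => a (t + 1)) atTop (nhds 0) :=
    hsummable.tendsto_atTop_zero
  exact (tendsto_add_atTop_iff_nat 1).mp h0
end

section
/- Let ε ∈ (0,1), δ ∈ (0,1), and let λ₁,…,λ_N be real numbers with λ_i ≥ 1 for each i. Suppose there exist real numbers α₁,…,α_N > 0 with Σ_{i=1}^N α_i = 1 such that λ_i² (ε + (1−ε) δ^{α_i}) < 1 for every i. Then ελ_i² < 1 for every i, and there exist positive integers n₁,…,n_N such that for every i: λ_i² (1−ε)/(1−ελ_i²) · δ^{n_i/(n_1+⋯+n_N)} < 1. -/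
/-- If there exist `α_i > 0` summing to 1 with `λ_i²(ε + (1-ε)δ^{α_i}) < 1` for all `i`,
then `ελ_i² < 1` for all `i` and there exist positive integers `n_i` with
`λ_i²(1-ε)/(1-ελ_i²) · δ^{n_i/(n_1+⋯+n_N)} < 1` for all `i`. -/
theorem stmt6 (ε δ : ℝ) (hε : ε ∈ Set.Ioo (0 : ℝ) 1) (hδ : δ ∈ Set.Ioo (0 : ℝ) 1)
    {N : ℕ} (lam : Fin N → ℝ) (hlam : ∀ i, 1 ≤ lam i)
    (α : Fin N → ℝ) (hαpos : ∀ i, 0 < α i) (hαsum : ∑ i, α i = 1)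
    (hsuff : ∀ i, lam i ^ 2 * (ε + (1 - ε) * δ ^ (α i)) < 1) :
    (∀ i, ε * lam i ^ 2 < 1) ∧
    ∃ n : Fin N → ℕ, (∀ i, 0 < n i) ∧
      ∀ i, lam i ^ 2 * (1 - ε) / (1 - ε * lam i ^ 2) *
        δ ^ ((n i : ℝ) / ∑ j, (n j : ℝ)) < 1 := by
  obtain ⟨hε0, hε1⟩ := hε
  obtain ⟨hδ0, hδ1⟩ := hδ
  have hl2 : ∀ i, (1:ℝ) ≤ lam i ^ 2 := fun i => by nlinarith [hlam i]
  have hεlam : ∀ i, ε * lam i ^ 2 < 1 := by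
    intro i
    have h := hsuff i
    have hδp : (0:ℝ) < δ ^ (α i) := Real.rpow_pos_of_pos hδ0 _
    have hp : 0 < lam i ^ 2 * ((1 - ε) * δ ^ (α i)) := by
      apply mul_pos (by nlinarith [hl2 i])
      exact mul_pos (by linarith) hδp
    nlinarith [hp]
  refine ⟨hεlam, ?_⟩
  rcases Nat.eq_zero_or_pos N with hN | hN
  · subst hN
    exact ⟨fun _ => 1, fun i => i.elim0, fun i => i.elim0⟩
  have hne : (Finset.univ : Finset (Fin N)).Nonempty := ⟨⟨0, hN⟩, Finset.mem_univ _⟩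
  set c : Fin N → ℝ := fun i => lam i ^ 2 * (1 - ε) / (1 - ε * lam i ^ 2) with hc
  have hcpos : ∀ i, 0 < c i := by
    intro i
    apply div_pos
    · have := hl2 i; nlinarith
    · linarith [hεlam i]
  have hkey : ∀ i, c i * δ ^ (α i) < 1 := by
    intro i
    have h := hsuff i
    have hd : 0 < 1 - ε * lam i ^ 2 := by linarith [hεlam i]
    rw [hc]
    rw [div_mul_eq_mul_div, div_lt_one hd]
    nlinarith
  set r : ℝ := Finset.univ.sup' hne (fun i => c i * δ ^ (α i)) with hr
  have hr1 : r < 1 := by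
    rw [hr, Finset.sup'_lt_iff]
    intro i _; exact hkey i
  have hr0 : 0 < r := by
    obtain ⟨i, hi⟩ := hne
    have : c i * δ ^ (α i) ≤ r := Finset.le_sup' (fun j => c j * δ ^ (α j)) hi
    have : 0 < c i * δ ^ (α i) := mul_pos (hcpos i) (Real.rpow_pos_of_pos hδ0 _)
    linarith
  have hlogr : Real.log r < 0 := Real.log_neg hr0 hr1
  have hlogδ : Real.log δ < 0 := Real.log_neg hδ0 hδ1
  set s : ℝ := Real.log r / Real.log δ / 2 with hs
  have hspos : 0 < s := by
    apply div_pos _ (by norm_num)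
    exact div_pos_of_neg_of_neg hlogr hlogδ
  have hδs : r < δ ^ s := by
    have h1 : δ ^ s = Real.exp (Real.log δ * s) := Real.rpow_def_of_pos hδ0 s
    have h2 : Real.log δ * s = Real.log r / 2 := by
      rw [hs]; field_simp [ne_of_lt hlogδ]
    calc r = Real.exp (Real.log r) := (Real.exp_log hr0).symm
    _ < Real.exp (Real.log r / 2) := Real.exp_lt_exp.mpr (by linarith)
    _ = δ ^ s := by rw [h1, h2]
  set M : ℕ := ⌈(N:ℝ) / s⌉₊ + 1 with hM
  have hMpos : (0:ℝ) < M := by positivity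
  have hMs : (N:ℝ) ≤ s * M := by
    have h1 : (N:ℝ) / s ≤ M := by
      rw [hM]; push_cast
      linarith [Nat.le_ceil ((N:ℝ) / s)]
    calc (N:ℝ) = s * ((N:ℝ)/s) := by field_simp
    _ ≤ s * M := by apply mul_le_mul_of_nonneg_left h1 hspos.le
  refine ⟨fun i => ⌈(M:ℝ) * α i⌉₊, ?_, ?_⟩
  · intro i
    have : (0:ℝ) < (M:ℝ) * α i := mul_pos hMpos (hαpos i)
    exact Nat.ceil_pos.mpr this
  intro i
  set n : Fin N → ℕ := fun i => ⌈(M:ℝ) * α i⌉₊ with hn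
  have hni : ∀ j, (M:ℝ) * α j ≤ (n j : ℝ) := fun j => Nat.le_ceil _
  have hni' : ∀ j, (n j : ℝ) ≤ (M:ℝ) * α j + 1 := by
    intro j
    have := Nat.ceil_lt_add_one (le_of_lt (mul_pos hMpos (hαpos j)))
    linarith
  set S : ℝ := ∑ j, (n j : ℝ) with hS
  have hSub : S ≤ M + N := by
    rw [hS]
    calc ∑ j, (n j : ℝ) ≤ ∑ j, ((M:ℝ) * α j + 1) := Finset.sum_le_sum (fun j _ => hni' j)
    _ = M + N := by
        rw [Finset.sum_add_distrib, ← Finset.mul_sum, hαsum]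
        simp [Finset.card_univ]
  have hSpos : 0 < S := by
    rw [hS]
    apply Finset.sum_pos _ hne
    intro j _
    have : (0:ℝ) < (M:ℝ) * α j := mul_pos hMpos (hαpos j)
    linarith [hni j]
  have hαle1 : α i ≤ 1 := by
    rw [← hαsum]
    exact Finset.single_le_sum (fun j _ => (hαpos j).le) (Finset.mem_univ i)
  have ht : α i - s ≤ (n i : ℝ) / S := by
    rw [le_div_iff₀ hSpos]
    have h1 : (α i - s) * S ≤ (α i - s) * (M + N) ∨ (α i - s) * S ≤ (n i : ℝ) := by
      rcases le_or_gt (α i - s) 0 with h | h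
      · right
        have : 0 ≤ (n i : ℝ) := by positivity
        nlinarith
      · left
        exact mul_le_mul_of_nonneg_left hSub h.le
    rcases h1 with h1 | h1
    · calc (α i - s) * S ≤ (α i - s) * (M + N) := h1
      _ ≤ (M:ℝ) * α i := by
          have ha : α i * N ≤ 1 * N :=
            mul_le_mul_of_nonneg_right hαle1 (Nat.cast_nonneg N)
          have hb : 0 ≤ s * N := mul_nonneg hspos.le (Nat.cast_nonneg N)
          nlinarith [hMs]
      _ ≤ (n i : ℝ) := hni i
    · exact h1
  have hmono : δ ^ ((n i : ℝ) / S) ≤ δ ^ (α i - s) :=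
    Real.rpow_le_rpow_of_exponent_ge hδ0 hδ1.le ht
  have hsub : δ ^ (α i - s) = δ ^ (α i) / δ ^ s := Real.rpow_sub hδ0 _ _
  have hδspos : 0 < δ ^ s := Real.rpow_pos_of_pos hδ0 s
  calc lam i ^ 2 * (1 - ε) / (1 - ε * lam i ^ 2) * δ ^ ((n i : ℝ) / S)
      ≤ c i * (δ ^ (α i) / δ ^ s) := by
        rw [← hsub]
        exact mul_le_mul_of_nonneg_left hmono (hcpos i).le
    _ = (c i * δ ^ (α i)) / δ ^ s := by ring
    _ ≤ r / δ ^ s := by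
        gcongr
        exact Finset.le_sup' (fun j => c j * δ ^ (α j)) (Finset.mem_univ i)
    _ < 1 := by rw [div_lt_one hδspos]; exact hδs
end

section
/- Let ε ∈ (0,1), δ ∈ (0,1), and let λ₁ > λ₂ > 1 be real numbers. Set φ = 2(ln λ₁ − ln λ₂)/ln δ (so φ < 0). If ln λ₁ + ln λ₂ < −ln((1−ε)√δ + ε), then the equation θφ − ln((1−ε) e^θ + ε) = 2 ln λ₁ admits a unique real solution θ, and this solution satisfies (1/2) ln δ < θ < 0. -/
/-- If `ln λ₁ + ln λ₂ < -ln((1-ε)√δ + ε)` with `λ₁ > λ₂ > 1`, `ε, δ ∈ (0,1)` and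
`φ = 2(ln λ₁ - ln λ₂)/ln δ`, then `φ < 0` and the equation
`θφ - ln((1-ε)e^θ + ε) = 2 ln λ₁` has a unique real solution `θ`,
which satisfies `(1/2) ln δ < θ < 0`. -/
theorem stmt9 (ε δ lam₁ lam₂ : ℝ) (hε : ε ∈ Set.Ioo (0 : ℝ) 1) (hδ : δ ∈ Set.Ioo (0 : ℝ) 1)
    (hlam₂ : 1 < lam₂) (hlam₁ : lam₂ < lam₁)
    (φ : ℝ) (hφ : φ = 2 * (Real.log lam₁ - Real.log lam₂) / Real.log δ)
    (h17 : Real.log lam₁ + Real.log lam₂ < -Real.log ((1 - ε) * Real.sqrt δ + ε)) :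
    φ < 0 ∧
    ∃ θ : ℝ, (θ * φ - Real.log ((1 - ε) * Real.exp θ + ε) = 2 * Real.log lam₁) ∧
      (1 / 2) * Real.log δ < θ ∧ θ < 0 ∧
      ∀ θ' : ℝ, θ' * φ - Real.log ((1 - ε) * Real.exp θ' + ε) = 2 * Real.log lam₁ →
        θ' = θ := by
  obtain ⟨hε0, hε1⟩ := hε
  obtain ⟨hδ0, hδ1⟩ := hδ
  have hlogδ : Real.log δ < 0 := Real.log_neg hδ0 hδ1
  have hL1 : 0 < Real.log lam₁ := Real.log_pos (lt_trans hlam₂ hlam₁)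
  have hL12 : Real.log lam₂ < Real.log lam₁ :=
    Real.log_lt_log (lt_trans one_pos hlam₂) hlam₁
  have hφneg : φ < 0 := by
    rw [hφ]
    exact div_neg_of_pos_of_neg (by linarith) hlogδ
  have f : ℝ → ℝ := fun θ => θ * φ - Real.log ((1 - ε) * Real.exp θ + ε)
  have hgpos : ∀ x : ℝ, 0 < (1 - ε) * Real.exp x + ε := fun x => by
    have := Real.exp_pos x; nlinarith
  set F : ℝ → ℝ := fun θ => θ * φ - Real.log ((1 - ε) * Real.exp θ + ε) with hF
  have hanti : StrictAnti F := by
    intro a b hab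
    have h1 : b * φ < a * φ := by nlinarith
    have h2 : Real.log ((1 - ε) * Real.exp a + ε) < Real.log ((1 - ε) * Real.exp b + ε) := by
      apply Real.log_lt_log (hgpos a)
      have := Real.exp_lt_exp.mpr hab
      nlinarith
    exact sub_lt_sub h1 h2
  have hcont : Continuous F := by
    apply Continuous.sub (continuous_id.mul continuous_const)
    exact ((continuous_const.mul Real.continuous_exp).add continuous_const).log
      (fun x => ne_of_gt (hgpos x))
  set s : ℝ := (1 / 2) * Real.log δ with hs
  have hs0 : s < 0 := by rw [hs]; linarith
  have hexps : Real.exp s = Real.sqrt δ := by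
    rw [Real.sqrt_eq_rpow, Real.rpow_def_of_pos hδ0, hs]
    ring_nf
  have hsφ : s * φ = Real.log lam₁ - Real.log lam₂ := by
    rw [hφ, hs]
    field_simp [hlogδ.ne]
  have hfs : F s = Real.log lam₁ - Real.log lam₂ - Real.log ((1 - ε) * Real.sqrt δ + ε) := by
    show s * φ - Real.log ((1 - ε) * Real.exp s + ε) = _
    rw [hexps, hsφ]
  have hfsT : 2 * Real.log lam₁ < F s := by rw [hfs]; linarith
  have hf0 : F 0 = 0 := by
    show 0 * φ - Real.log ((1 - ε) * Real.exp 0 + ε) = 0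
    simp
  have hf0T : F 0 < 2 * Real.log lam₁ := by rw [hf0]; linarith
  obtain ⟨θ, hθmem, hθeq⟩ := intermediate_value_Ioo' (le_of_lt hs0) hcont.continuousOn
    (Set.mem_Ioo.mpr ⟨hf0T, hfsT⟩)
  exact ⟨hφneg, θ, hθeq, hθmem.1, hθmem.2,
    fun θ' hθ' => hanti.injective (hθ'.trans hθeq.symm)⟩
end
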